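/- Let m ≥ 2 and let C be a Type II Z_{2^m}-code of length n with a generator matrix G in standard form of type (k_1,…,k_m); set K = k_1+⋯+k_m and let G_1,…,G_K be the rows of G. Let w ∈ (Z/2^m)^n \ C be a vector all of whose coordinates lie in {0, 2^{m−1}}, which is zero on the first K coordinates, and with n_{2^{m−1}}(w) even in case m = 2. Define B_E = {G_t : 1 ≤ t ≤ K, ⟨G_t, w⟩ = 0} and B_O = {G_1,…,G_K} \ B_E, fix any G_i ∈ B_O, and set B_O′ = {G_i + G_j : G_j ∈ B_O}. Then the additive subgroup of (Z/2^m)^n generated by B_O′ ∪ B_E ∪ {w} equals C̃ = {v ∈ C : ⟨w,v⟩ = 0} + ⟨w⟩. -/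

import Mathlib

open Finset

/-- Inner product of two vectors over `ZMod N`. -/
def innerZ {N n : ℕ} (x y : Fin n → ZMod N) : ZMod N := ∑ i, x i * y i

/-- Euclidean weight of a vector over `ZMod N`. -/
def euclWt {N n : ℕ} (x : Fin n → ZMod N) : ℕ :=
  ∑ i, min ((x i).val ^ 2) ((N - (x i).val) ^ 2)

/-- Number of coordinates of `x` equal to `a`. -/
def cntEq {N n : ℕ} (a : ZMod N) (x : Fin n → ZMod N) : ℕ :=
  (Finset.univ.filter fun j => x j = a).card

/-- A code is self-dual if it equals its dual. -/
def IsSelfDual {N n : ℕ} (C : AddSubgroup (Fin n → ZMod N)) : Prop :=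
  ∀ x, x ∈ C ↔ ∀ y ∈ C, innerZ x y = 0

/-- The subcode `{v ∈ C : ⟨w, v⟩ = 0}`. -/
def evenPart {N n : ℕ} (C : AddSubgroup (Fin n → ZMod N)) (w : Fin n → ZMod N) :
    AddSubgroup (Fin n → ZMod N) where
  carrier := {v | v ∈ C ∧ innerZ w v = 0}
  zero_mem' := ⟨C.zero_mem, by simp [innerZ]⟩
  add_mem' := by
    rintro a b ⟨ha, ha0⟩ ⟨hb, hb0⟩
    refine ⟨C.add_mem ha hb, ?_⟩
    have h : innerZ w (a + b) = innerZ w a + innerZ w b := by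
      simp [innerZ, mul_add, Finset.sum_add_distrib]
    rw [h, ha0, hb0, add_zero]
  neg_mem' := by
    rintro a ⟨ha, ha0⟩
    refine ⟨C.neg_mem ha, ?_⟩
    have h : innerZ w (-a) = - innerZ w a := by
      simp [innerZ]
    rw [h, ha0, neg_zero]

/-- `kv` extended to all of `ℕ` by zero. -/
def extk {m : ℕ} (kv : Fin m → ℕ) : ℕ → ℕ := fun t => if h : t < m then kv ⟨t, h⟩ else 0

/-- Partial sums `k_1 + ⋯ + k_j`. -/
def psum {m : ℕ} (kv : Fin m → ℕ) (j : ℕ) : ℕ := ∑ t ∈ Finset.range j, extk kv t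

/-- `G` is a generator matrix in standard form of type `(k_1, …, k_m)`. -/
def StandardForm {N : ℕ} {m n : ℕ} (kv : Fin m → ℕ)
    (G : Fin (psum kv m) → Fin n → ZMod N) : Prop :=
  psum kv m ≤ n ∧
  ∀ (j : Fin m) (r : Fin (psum kv m)), psum kv (j : ℕ) ≤ (r : ℕ) → (r : ℕ) < psum kv ((j : ℕ) + 1) →
    ∀ c : Fin n,
      (∀ l : Fin m, psum kv (l : ℕ) ≤ (c : ℕ) → (c : ℕ) < psum kv ((l : ℕ) + 1) →
        (l < j → G r c = 0) ∧
        (l = j → G r c = if (r : ℕ) = (c : ℕ) then (2 ^ (j : ℕ) : ZMod N) else 0)) ∧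
      ((psum kv m ≤ (c : ℕ) ∨
        ∃ l : Fin m, j < l ∧ psum kv (l : ℕ) ≤ (c : ℕ) ∧ (c : ℕ) < psum kv ((l : ℕ) + 1)) →
        ∃ a : ZMod N, G r c = 2 ^ (j : ℕ) * a)

/-- The minimum Euclidean weight over nonzero codewords equals `d`. -/
def minEuclWtIs {N n : ℕ} (C : AddSubgroup (Fin n → ZMod N)) (d : ℕ) : Prop :=
  (∀ x ∈ C, x ≠ 0 → d ≤ euclWt x) ∧ ∃ x ∈ C, x ≠ 0 ∧ euclWt x = d

/-- Coordinatewise reduction modulo 4. -/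
def res4 {n : ℕ} : (Fin n → ZMod 8) →+ (Fin n → ZMod 4) where
  toFun := fun x i => ZMod.castHom (by norm_num : (4 : ℕ) ∣ 8) (ZMod 4) (x i)
  map_zero' := by ext i; simp
  map_add' := by intro a b; ext i; exact map_add (ZMod.castHom (by norm_num) _) _ _

/-- Coordinatewise reduction modulo 2. -/
def res2 {n : ℕ} : (Fin n → ZMod 8) →+ (Fin n → ZMod 2) where
  toFun := fun x i => ZMod.castHom (by norm_num : (2 : ℕ) ∣ 8) (ZMod 2) (x i)
  map_zero' := by ext i; simp
  map_add' := by intro a b; ext i; exact map_add (ZMod.castHom (by norm_num) _) _ _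

/-- Hamming weight of a binary vector. -/
def hammingWt {n : ℕ} (y : Fin n → ZMod 2) : ℕ :=
  (Finset.univ.filter fun i => y i ≠ 0).card

/-- Equivalence of codes: a permutation of coordinates combined with sign changes. -/
def codeEquiv {N n : ℕ} (C C' : AddSubgroup (Fin n → ZMod N)) : Prop :=
  ∃ (σ : Equiv.Perm (Fin n)) (ε : Fin n → ZMod N),
    (∀ i, ε i = 1 ∨ ε i = -1) ∧
    ∀ y, y ∈ C' ↔ ∃ x ∈ C, y = fun i => ε i * x (σ i)


theorem myaux_hval {m : ℕ} (hm : 1 ≤ m) (x : ZMod (2^m)) (h : x + x = 0) :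
    x = 0 ∨ x = (2:ZMod (2^m))^(m-1) := by
  haveI : NeZero ((2:ℕ)^m) := ⟨by positivity⟩
  have hx : ((x.val : ℕ) : ZMod (2^m)) = x := ZMod.natCast_rightInverse x
  have h2 : ((2 * x.val : ℕ) : ZMod (2^m)) = 0 := by push_cast; rw [hx]; rw [two_mul]; exact h
  obtain ⟨k, hk⟩ := (ZMod.natCast_eq_zero_iff _ _).mp h2
  have hm' : (2:ℕ)^m = 2 * 2^(m-1) := by rw [← pow_succ']; congr 1; omega
  have hk' : 2 * x.val = 2 * (2^(m-1) * k) := by rw [hk, hm']; ring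
  have hxv : x.val = 2^(m-1) * k := by omega
  have hlt : x.val < 2 * 2^(m-1) := by have := x.val_lt; omega
  have hk2 : k < 2 := by nlinarith [Nat.pow_pos (n := m-1) (show 0 < 2 by norm_num)]
  interval_cases k
  · left; rw [← hx, hxv]; simp
  · right; rw [← hx, hxv]; push_cast; ring

theorem myaux_int_half {m : ℕ} (hm : 1 ≤ m) (c : ℤ)
    (h : c • ((2:ZMod (2^m))^(m-1)) = 0) : 2 ∣ c := by
  haveI : NeZero ((2:ℕ)^m) := ⟨by positivity⟩
  have h2 : ((c * 2^(m-1) : ℤ) : ZMod (2^m)) = 0 := by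
    push_cast
    rw [← zsmul_eq_mul]; exact h
  obtain ⟨k, hk⟩ := (ZMod.intCast_zmod_eq_zero_iff_dvd _ _).mp h2
  have hm' : (((2:ℕ)^m : ℕ) : ℤ) = 2 * 2^(m-1) := by
    have : (2:ℕ)^m = 2 * 2^(m-1) := by rw [← pow_succ']; congr 1; omega
    rw [this]; push_cast; ring
  have hk' : c * 2^(m-1) = (2 * k) * 2^(m-1) := by rw [hk, hm']; ring
  exact ⟨k, mul_right_cancel₀ (by positivity) hk'⟩

/-- the set `B_O' ∪ B_E ∪ {w}` generates the doubled code
`C̃ = {v ∈ C : ⟨w,v⟩ = 0} + ⟨w⟩`. -/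
theorem doubling_generators {m n : ℕ} (hm : 2 ≤ m) (kv : Fin m → ℕ)
    (G : Fin (psum kv m) → Fin n → ZMod (2 ^ m)) (hSF : StandardForm kv G)
    (C : AddSubgroup (Fin n → ZMod (2 ^ m)))
    (hgen : C = AddSubgroup.closure (Set.range G))
    (hsd : IsSelfDual C) (hT2 : ∀ x ∈ C, 2 ^ (m + 1) ∣ euclWt x)
    (w : Fin n → ZMod (2 ^ m)) (hwC : w ∉ C)
    (hcoord : ∀ i, w i = 0 ∨ w i = (2 ^ (m - 1) : ZMod (2 ^ m)))
    (hzero : ∀ i : Fin n, (i : ℕ) < psum kv m → w i = 0)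
    (hpar : m = 2 → 2 ∣ cntEq (2 ^ (m - 1) : ZMod (2 ^ m)) w)
    (i : Fin (psum kv m)) (hi : innerZ (G i) w ≠ 0) :
    AddSubgroup.closure
      ({v | ∃ j : Fin (psum kv m), innerZ (G j) w ≠ 0 ∧ v = G i + G j} ∪
       {v | ∃ t : Fin (psum kv m), innerZ (G t) w = 0 ∧ v = G t} ∪ {w}) =
    evenPart C w ⊔ AddSubgroup.closure {w} := by
  -- basic facts about the inner product
  have hsym : ∀ a b : Fin n → ZMod (2^m), innerZ a b = innerZ b a := by
    intro a b; simp [innerZ, mul_comm]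
  have hadd : ∀ a b : Fin n → ZMod (2^m), innerZ w (a+b) = innerZ w a + innerZ w b := by
    intro a b; simp [innerZ, mul_add, Finset.sum_add_distrib]
  let φ : (Fin n → ZMod (2^m)) →+ ZMod (2^m) :=
    { toFun := innerZ w
      map_zero' := by simp [innerZ]
      map_add' := hadd }
  have hφ : ∀ x, φ x = innerZ w x := fun _ => rfl
  have h2m : ((2:ZMod (2^m)))^m = 0 := by
    have : (((2:ℕ)^m : ℕ) : ZMod (2^m)) = 0 := ZMod.natCast_self _
    push_cast at this; exact this
  have hhalf : (2:ZMod (2^m)) * (2:ZMod (2^m))^(m-1) = 0 := by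
    rw [← pow_succ']
    have he : m - 1 + 1 = m := by omega
    rw [he, h2m]
  have hww' : ∀ j, w j + w j = 0 := by
    intro j; rcases hcoord j with h | h <;> rw [h]
    · simp
    · rw [← two_mul]; exact hhalf
  have h2w : ∀ x : Fin n → ZMod (2^m), innerZ x w + innerZ x w = 0 := by
    intro x
    simp only [innerZ, ← Finset.sum_add_distrib]
    apply Finset.sum_eq_zero; intro j _
    rw [← mul_add, hww' j, mul_zero]
  have hO : ∀ j : Fin (psum kv m), innerZ (G j) w ≠ 0 →
      innerZ (G j) w = (2:ZMod (2^m))^(m-1) := by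
    intro j hj
    rcases myaux_hval (by omega) _ (h2w (G j)) with h | h
    · exact absurd h hj
    · exact h
  have hwwz : innerZ w w = 0 := by
    apply Finset.sum_eq_zero; intro j _
    rcases hcoord j with h | h <;> rw [h]
    · simp
    · rw [← pow_add]
      have he : m - 1 + (m - 1) = m + (m - 2) := by omega
      rw [he, pow_add, h2m, zero_mul]
  have hGC : ∀ j, G j ∈ C := by
    intro j; rw [hgen]
    exact AddSubgroup.subset_closure ⟨j, rfl⟩
  set S : Set (Fin n → ZMod (2^m)) :=
    ({v | ∃ j : Fin (psum kv m), innerZ (G j) w ≠ 0 ∧ v = G i + G j} ∪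
     {v | ∃ t : Fin (psum kv m), innerZ (G t) w = 0 ∧ v = G t} ∪ {w}) with hS
  -- every element of S pairs to zero with w
  have hker : AddSubgroup.closure S ≤ φ.ker := by
    apply (AddSubgroup.closure_le _).mpr
    rintro x (( ⟨j, hj, rfl⟩ | ⟨t, ht, rfl⟩ ) | rfl)
    · have : φ (G i + G j) = 0 := by
        rw [hφ, hadd, ← hsym (G i) w, ← hsym (G j) w, hO i hi, hO j hj, ← two_mul, hhalf]
      exact this
    · have : φ (G t) = 0 := by rw [hφ, ← hsym (G t) w, ht]
      exact this
    · exact hwwz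
  apply le_antisymm
  · -- closure S ≤ evenPart ⊔ closure {w}
    apply (AddSubgroup.closure_le _).mpr
    rintro x (( ⟨j, hj, rfl⟩ | ⟨t, ht, rfl⟩ ) | rfl)
    · refine le_sup_left (α := AddSubgroup (Fin n → ZMod (2^m))) ?_
      refine ⟨C.add_mem (hGC i) (hGC j), ?_⟩
      rw [hadd, ← hsym (G i) w, ← hsym (G j) w, hO i hi, hO j hj, ← two_mul, hhalf]
    · refine le_sup_left (α := AddSubgroup (Fin n → ZMod (2^m))) ?_
      exact ⟨hGC t, by rw [← hsym (G t) w, ht]⟩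
    · exact le_sup_right (α := AddSubgroup (Fin n → ZMod (2^m)))
        (AddSubgroup.subset_closure rfl)
  · -- evenPart ⊔ closure {w} ≤ closure S
    apply sup_le
    · intro v hv
      obtain ⟨hvC, hvw⟩ := hv
      -- C ≤ closure S ⊔ closure {G i}
      have hCle : C ≤ AddSubgroup.closure S ⊔ AddSubgroup.closure {G i} := by
        rw [hgen]
        apply (AddSubgroup.closure_le _).mpr
        rintro x ⟨j, rfl⟩
        by_cases hj : innerZ (G j) w = 0
        · exact le_sup_left (α := AddSubgroup (Fin n → ZMod (2^m)))
            (AddSubgroup.subset_closure (Or.inl (Or.inr ⟨j, hj, rfl⟩)))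
        · have h1 : G i + G j ∈ AddSubgroup.closure S :=
            AddSubgroup.subset_closure (Or.inl (Or.inl ⟨j, hj, rfl⟩))
          have h2 : -(G i) ∈ AddSubgroup.closure {G i} :=
            AddSubgroup.neg_mem _ (AddSubgroup.subset_closure rfl)
          have : G j = -(G i) + (G i + G j) := by abel
          rw [this]
          exact AddSubgroup.add_mem _
            (le_sup_right (α := AddSubgroup (Fin n → ZMod (2^m))) h2)
            (le_sup_left (α := AddSubgroup (Fin n → ZMod (2^m))) h1)
      obtain ⟨a, ha, b, hb, hab⟩ := (AddSubgroup.mem_sup).mp (hCle hvC)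
      obtain ⟨c, rfl⟩ := AddSubgroup.mem_closure_singleton.mp hb
      -- innerZ w a = 0
      have haw : innerZ w a = 0 := hker ha
      have hcw : c • innerZ w (G i) = 0 := by
        have h1 : innerZ w (c • G i) = c • innerZ w (G i) := by
          rw [← hφ, map_zsmul, hφ]
        have h2 : innerZ w v = innerZ w a + innerZ w (c • G i) := by
          rw [← hab, hadd]
        rw [hvw, haw, zero_add] at h2
        rw [← h1, ← h2]
      rw [← hsym (G i) w, hO i hi] at hcw
      obtain ⟨d, rfl⟩ := myaux_int_half (by omega) c hcw
      have hGiGi : G i + G i ∈ AddSubgroup.closure S :=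
        AddSubgroup.subset_closure (Or.inl (Or.inl ⟨i, hi, rfl⟩))
      have hsm : (2 * d) • G i = d • (G i + G i) := by
        rw [mul_smul, smul_comm, two_smul]
      rw [← hab, hsm]
      exact AddSubgroup.add_mem _ ha (AddSubgroup.zsmul_mem _ hGiGi d)
    · apply (AddSubgroup.closure_le _).mpr
      rintro x rfl
      exact AddSubgroup.subset_closure (Or.inr rfl)
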